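/- For the Erdős–Rényi modularity query vector q = v(A) − γ·(m/N)·1, with 0 < m < N edges and γ > 1, the latitude satisfies tan ℓ(q) = √((N−m)/m) / (γ−1), where ℓ(q) = d_a(q, −1). -/

import Mathlib

open Real BigOperators Filter

noncomputable section

/-- Index type for node pairs i < j of [n]. -/
abbrev PairIdx (n : ℕ) := {p : Fin n × Fin n // p.1 < p.2}

/-- Inner product on ℝ^N indexed by node pairs. -/
def inn {n : ℕ} (x y : PairIdx n → ℝ) : ℝ := ∑ p : PairIdx n, x p * y p

/-- Euclidean norm. -/
def nrm {n : ℕ} (x : PairIdx n → ℝ) : ℝ := Real.sqrt (inn x x)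

/-- Angular distance d_a(x,y) = arccos(⟨x,y⟩/(‖x‖‖y‖)). -/
def angDist {n : ℕ} (x y : PairIdx n → ℝ) : ℝ :=
  Real.arccos (inn x y / (nrm x * nrm y))

/-- The all-ones vector. -/
def allOnes (n : ℕ) : PairIdx n → ℝ := fun _ => 1

/-- Latitude ℓ(x) = d_a(x, -1). -/
def lat {n : ℕ} (x : PairIdx n → ℝ) : ℝ := angDist x (fun _ => -1)

/-- Clustering vector of a clustering given by a label function. -/
def bvec {n : ℕ} {L : Type*} [DecidableEq L] (c : Fin n → L) : PairIdx n → ℝ :=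
  fun p => if c p.1.1 = c p.1.2 then 1 else -1

/-- Intra-cluster pairs of a clustering. -/
def intraP {n : ℕ} {L : Type*} [DecidableEq L] (c : Fin n → L) : Finset (PairIdx n) :=
  Finset.univ.filter (fun p => c p.1.1 = c p.1.2)

/-- Inter-cluster pairs of a clustering. -/
def interP {n : ℕ} {L : Type*} [DecidableEq L] (c : Fin n → L) : Finset (PairIdx n) :=
  Finset.univ.filter (fun p => c p.1.1 ≠ c p.1.2)

/-- Pearson correlation between two vectors. -/
def pearson {n : ℕ} (x y : PairIdx n → ℝ) : ℝ :=
  inn (fun p => x p - inn x (allOnes n) / (n.choose 2 : ℝ))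
      (fun p => y p - inn y (allOnes n) / (n.choose 2 : ℝ)) /
  (nrm (fun p => x p - inn x (allOnes n) / (n.choose 2 : ℝ)) *
   nrm (fun p => y p - inn y (allOnes n) / (n.choose 2 : ℝ)))

theorem card_pairIdx (n : ℕ) : Fintype.card (PairIdx n) = n.choose 2 := by
  have e : (Σ j : Fin n, Fin j) ≃ PairIdx n :=
    { toFun := fun ⟨j, i⟩ => ⟨(⟨i, i.2.trans j.2⟩, j), i.2⟩
      invFun := fun ⟨(i, j), h⟩ => ⟨j, ⟨i, h⟩⟩
      left_inv := fun ⟨j, i⟩ => rfl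
      right_inv := fun ⟨(i, j), h⟩ => rfl }
  rw [← Fintype.card_congr e, Fintype.card_sigma]
  simp only [Fintype.card_fin]
  rw [show (∑ x : Fin n, (x:ℕ)) = ∑ i ∈ Finset.range n, i from
      Fin.sum_univ_eq_sum_range (fun i => i) n, Finset.sum_range_id, Nat.choose_two_right]

set_option maxHeartbeats 1000000 in
/-- tan ℓ(q) = √((N−m)/m)/(γ−1) for the ER-modularity query vector. -/
theorem stmt13 (n m : ℕ) (v : PairIdx n → ℝ) (hv : ∀ p, v p = 0 ∨ v p = 1)
    (hm : (m : ℝ) = ∑ p : PairIdx n, v p) (h0 : 0 < m) (h1 : m < n.choose 2)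
    (γ : ℝ) (hγ : 1 < γ) :
    Real.tan (lat (fun p => v p - γ * ((m : ℝ) / (n.choose 2 : ℝ)))) =
      Real.sqrt (((n.choose 2 : ℝ) - (m : ℝ)) / (m : ℝ)) / (γ - 1) := by
  have hcard := card_pairIdx n
  set N : ℝ := (n.choose 2 : ℝ) with hNdef
  have hN : 0 < N := by
    have h' : 0 < n.choose 2 := h0.trans h1
    rw [hNdef]; exact_mod_cast h'
  have hmR : (0:ℝ) < m := by exact_mod_cast h0
  have hNm : (m:ℝ) < N := by rw [hNdef]; exact_mod_cast h1
  set c : ℝ := γ * ((m:ℝ)/N) with hc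
  have hsum_const : ∀ (a : ℝ), (∑ _p : PairIdx n, a) = N * a := by
    intro a
    rw [Finset.sum_const, Finset.card_univ, hcard, nsmul_eq_mul]
  have hvsq : ∀ p, v p * v p = v p := fun p => by rcases hv p with h|h <;> simp [h]
  -- inner product with -1
  have hinn1 : inn (fun p => v p - c) (fun _ => (-1:ℝ)) = (γ - 1) * m := by
    unfold inn
    have h1' : ∀ p : PairIdx n, (v p - c) * (-1) = c - v p := fun p => by ring
    simp_rw [h1']
    rw [Finset.sum_sub_distrib, hsum_const, ← hm, hc]
    field_simp
  -- squared norm of q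
  have hinn2 : inn (fun p => v p - c) (fun p => v p - c) = m - 2*c*m + N*c^2 := by
    unfold inn
    have h2' : ∀ p : PairIdx n, (v p - c) * (v p - c) = v p - 2*c*(v p) + c^2 := by
      intro p
      nlinarith [hvsq p]
    simp_rw [h2']
    rw [Finset.sum_add_distrib, Finset.sum_sub_distrib, ← Finset.mul_sum, ← hm, hsum_const]
  set S : ℝ := m - 2*c*m + N*c^2 with hS
  have hNS : S * N = m * (N - m) + ((γ-1) * m)^2 := by
    rw [hS, hc]
    field_simp
    ring
  have hSNpos : 0 < S * N := by
    rw [hNS]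
    have : 0 < (m:ℝ) * (N - m) := mul_pos hmR (by linarith)
    positivity
  have hSpos : 0 < S := by
    by_contra h
    push_neg at h
    nlinarith
  have hnrm1 : nrm (fun _ : PairIdx n => (-1:ℝ)) = Real.sqrt N := by
    unfold nrm inn
    norm_num [hsum_const]
  have hnrmq : nrm (fun p => v p - c) = Real.sqrt S := by
    unfold nrm
    rw [hinn2]
  have hγ0 : 0 < γ - 1 := by linarith
  -- unfold latitude
  show Real.tan (angDist (fun p => v p - c) (fun _ => -1)) = _
  unfold angDist
  rw [hinn1, hnrmq, hnrm1, ← Real.sqrt_mul hSpos.le, Real.tan_arccos]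
  have hsqrtSN : Real.sqrt (S * N) ≠ 0 := by positivity
  have hA2 : ((γ - 1) * ↑m / Real.sqrt (S * N))^2 = ((γ-1)*m)^2 / (S*N) := by
    rw [div_pow, Real.sq_sqrt hSNpos.le]
  have h1A : 1 - ((γ - 1) * ↑m / Real.sqrt (S * N))^2 = (m * (N - m)) / (S*N) := by
    rw [hA2]
    field_simp
    linarith [hNS]
  have hmNm : (0:ℝ) ≤ m * (N - m) := mul_nonneg hmR.le (by linarith)
  rw [h1A, Real.sqrt_div hmNm (S*N)]
  rw [div_div_div_comm, div_self hsqrtSN, div_one]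
  have hrhs : Real.sqrt ((N - m)/m) = Real.sqrt (m * (N - m)) / m := by
    rw [show (N - m)/(m:ℝ) = (m * (N-m))/(m^2) by field_simp,
      Real.sqrt_div (by positivity), Real.sqrt_sq hmR.le]
  rw [hrhs, div_div]
  ring_nf
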